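/- Let (x_n) satisfy x_{n+10} = x_n / (1 + B·x_n·x_{n+2}·x_{n+4}·x_{n+6}·x_{n+8}) with all terms nonzero and all denominators nonzero, where B ≠ 0. Then for each k ∈ {0,...,9} and n ≥ 0, x_{10n+k} = x_k · ∏_{s=0}^{n-1} (1 + B·(5s + ⌊k/2⌋)·P_{τ(k)}) / (1 + B·(5s + ⌊k/2⌋ + 1)·P_{τ(k)}), where τ(k) = k mod 2 and P_j = x_j·x_{j+2}·x_{j+4}·x_{j+6}·x_{j+8}. -/

import Mathlib

theorem stmt4 (B : ℝ) (hB : B ≠ 0) (x : ℕ → ℝ)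
    (hx : ∀ n, x n ≠ 0)
    (hden : ∀ n, 1 + B * (x n * x (n+2) * x (n+4) * x (n+6) * x (n+8)) ≠ 0)
    (hrec : ∀ n, x (n + 10) =
      x n / (1 + B * (x n * x (n+2) * x (n+4) * x (n+6) * x (n+8)))) :
    ∀ k < 10, ∀ n : ℕ,
      x (10 * n + k) = x k * ∏ s ∈ Finset.range n,
        (1 + B * ((5 * s + k / 2 : ℕ) : ℝ) *
            (x (k % 2) * x (k % 2 + 2) * x (k % 2 + 4) * x (k % 2 + 6) * x (k % 2 + 8))) /
        (1 + B * (((5 * s + k / 2 : ℕ) : ℝ) + 1) *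
            (x (k % 2) * x (k % 2 + 2) * x (k % 2 + 4) * x (k % 2 + 6) * x (k % 2 + 8))) := by
  intro k hk
  set Q : ℕ → ℝ := fun n => x n * x (n+2) * x (n+4) * x (n+6) * x (n+8) with hQ
  have hQne : ∀ n, Q n ≠ 0 := fun n =>
    mul_ne_zero (mul_ne_zero (mul_ne_zero (mul_ne_zero (hx n) (hx _)) (hx _)) (hx _)) (hx _)
  have hdenQ : ∀ n, 1 + B * Q n ≠ 0 := hden
  have hQstep : ∀ n, Q (n + 2) * (1 + B * Q n) = Q n := by
    intro n
    have h10 := hrec n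
    show x (n+2) * x (n+2+2) * x (n+2+4) * x (n+2+6) * x (n+2+8) * (1 + B * Q n) = Q n
    have e8 : n + 2 + 8 = n + 10 := by omega
    have e6 : n + 2 + 6 = n + 8 := by omega
    have e4 : n + 2 + 4 = n + 6 := by omega
    have e2 : n + 2 + 2 = n + 4 := by omega
    rw [e8, e6, e4, e2, h10]
    show _ * (1 + B * (x n * x (n+2) * x (n+4) * x (n+6) * x (n+8))) =
      x n * x (n+2) * x (n+4) * x (n+6) * x (n+8)
    rw [mul_assoc, div_mul_cancel₀ _ (hden n)]
    ring
  -- key telescoping fact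
  have key : ∀ j m : ℕ, Q (j + 2*m) * (1 + B * (m:ℝ) * Q j) = Q j := by
    intro j m
    induction m with
    | zero => simp
    | succ m ih =>
      have hne : (1 + B * (m:ℝ) * Q j) ≠ 0 := by
        intro h
        exact hQne j (by rw [← ih, h, mul_zero])
      have hqm : Q (j + 2*m) = Q j / (1 + B * (m:ℝ) * Q j) := by
        rw [eq_div_iff hne]; exact ih
      have hs := hQstep (j + 2*m)
      rw [hqm] at hs
      have e : j + 2*(m+1) = j + 2*m + 2 := by omega
      rw [e]
      have hx2 : (1 + B * (Q j / (1 + B * (m:ℝ) * Q j))) * (1 + B * (m:ℝ) * Q j)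
          = 1 + B * ((m:ℝ)+1) * Q j := by
        rw [add_mul, mul_assoc B (Q j / _), div_mul_cancel₀ _ hne]
        ring
      have hkey : Q (j + 2*m + 2) * ((1 + B * (Q j / (1 + B * (m:ℝ) * Q j))) * (1 + B * (m:ℝ) * Q j))
          = Q j := by rw [← mul_assoc, hs]; exact div_mul_cancel₀ _ hne
      rw [hx2] at hkey
      rw [Nat.cast_add, Nat.cast_one]
      exact hkey
  have hnz : ∀ j m : ℕ, (1 + B * (m:ℝ) * Q j) ≠ 0 := by
    intro j m h
    exact hQne j (by rw [← key j m, h, mul_zero])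
  intro n
  induction n with
  | zero => simp
  | succ n ih =>
    rw [Finset.prod_range_succ, ← mul_assoc, ← ih]
    have e : 10 * (n + 1) + k = (10 * n + k) + 10 := by omega
    rw [e, hrec (10*n+k)]
    set m := 5 * n + k / 2 with hm
    have em : 10 * n + k = k % 2 + 2 * m := by omega
    have h1 : (1 + B * (m:ℝ) * Q (k%2)) ≠ 0 := hnz (k%2) m
    have h2 : (1 + B * ((m:ℝ)+1) * Q (k%2)) ≠ 0 := by
      have h := hnz (k%2) (m+1); push_cast at h; exact h
    have hQval : Q (10*n+k) = Q (k%2) / (1 + B * (m:ℝ) * Q (k%2)) := by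
      rw [eq_div_iff h1, em]; exact key (k%2) m
    show x (10*n+k) / (1 + B * Q (10*n+k)) =
      x (10*n+k) * ((1 + B * (m:ℝ) * Q (k%2)) / (1 + B * ((m:ℝ)+1) * Q (k%2)))
    rw [hQval]
    have hden2 : 1 + B * (Q (k%2) / (1 + B * (m:ℝ) * Q (k%2))) =
        (1 + B * ((m:ℝ)+1) * Q (k%2)) / (1 + B * (m:ℝ) * Q (k%2)) := by
      rw [eq_div_iff h1, add_mul, mul_assoc B (Q (k%2) / _), div_mul_cancel₀ _ h1]
      ring
    rw [hden2]
    rw [div_div_eq_mul_div, mul_div_assoc]
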